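/- arXiv:0809.2074 — 3 statements merged into one kernel-verified Lean document; each statement's English description precedes it below -/
import Mathlib

section
/- Let q ≥ 3 be an integer and for a complex number s ≠ 1 and an integer ℓ coprime to q define A(s,ℓ,q) = ∑_{1 ≤ a,b ≤ q, ab ≡ ℓ (mod q)} q^{−2s} (ζ(s,a/q) − 1/(s−1))(ζ(s,b/q) − 1/(s−1)). Then for every real s with s > 0 and s ≠ 1, ∑_{χ ≠ χ₀ (mod q)} |L(s,χ)|⁴ = φ(q) ∑_{ℓ=1, (ℓ,q)=1}^{q} |A(s,ℓ,q)|² − |∑_{ℓ=1, (ℓ,q)=1}^{q} A(s,ℓ,q)|². -/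
open HurwitzZeta
open scoped Classical

namespace SumAbsAux

/-- The index set of residues coprime to `q`. -/
noncomputable def S (q : ℕ) : Finset ℕ := (Finset.Icc 1 q).filter (fun ℓ => Nat.Coprime ℓ q)

lemma mem_S_lt {q : ℕ} (hq : 3 ≤ q) {ℓ : ℕ} (hℓ : ℓ ∈ S q) : ℓ < q := by
  simp only [S, Finset.mem_filter, Finset.mem_Icc] at hℓ
  rcases hℓ with ⟨⟨h1, h2⟩, hcop⟩
  rcases lt_or_eq_of_le h2 with h | h
  · exact h
  · subst h
    have : Nat.gcd ℓ ℓ = ℓ := Nat.gcd_self ℓ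
    rw [Nat.Coprime, this] at hcop
    omega

lemma mem_S_coprime {q : ℕ} {ℓ : ℕ} (hℓ : ℓ ∈ S q) : Nat.Coprime ℓ q := by
  simp only [S, Finset.mem_filter] at hℓ; exact hℓ.2

lemma val_cast_S {q : ℕ} [NeZero q] (hq : 3 ≤ q) {ℓ : ℕ} (hℓ : ℓ ∈ S q) :
    ((ℓ : ZMod q)).val = ℓ := ZMod.val_cast_of_lt (mem_S_lt hq hℓ)

lemma isUnit_cast_S {q : ℕ} [NeZero q] {ℓ : ℕ} (hℓ : ℓ ∈ S q) :
    IsUnit ((ℓ : ℕ) : ZMod q) := (ZMod.isUnit_iff_coprime ℓ q).mpr (mem_S_coprime hℓ)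

lemma val_mem_S {q : ℕ} [NeZero q] (hq : 3 ≤ q) {t : ZMod q} (ht : IsUnit t) :
    t.val ∈ S q := by
  haveI : Fact (1 < q) := ⟨by omega⟩
  have h0 : t ≠ 0 := ht.ne_zero
  have hv0 : t.val ≠ 0 := fun h => h0 ((ZMod.val_eq_zero t).mp h)
  have hvq : t.val < q := ZMod.val_lt t
  have hcast : ((t.val : ℕ) : ZMod q) = t := ZMod.natCast_rightInverse t
  simp only [S, Finset.mem_filter, Finset.mem_Icc]
  refine ⟨⟨by omega, by omega⟩, ?_⟩
  exact (ZMod.isUnit_iff_coprime t.val q).mp (by rwa [hcast])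

/-- Collapsing the indicator sum over `S q`. -/
lemma key_sum {q : ℕ} [NeZero q] (hq : 3 ≤ q) (χ : DirichletCharacter ℂ q)
    (t : ZMod q) (K : ℂ) :
    (∑ ℓ ∈ S q, if t = ((ℓ : ℕ) : ZMod q) then χ ((ℓ : ℕ) : ZMod q) * K else 0)
      = χ t * K := by
  have hcongr : ∀ ℓ ∈ S q,
      (if t = ((ℓ : ℕ) : ZMod q) then χ ((ℓ : ℕ) : ZMod q) * K else 0)
        = (if t = ((ℓ : ℕ) : ZMod q) then χ t * K else 0) := by
    intro ℓ _
    split_ifs with h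
    · rw [h]
    · rfl
  rw [Finset.sum_congr rfl hcongr]
  by_cases ht : IsUnit t
  · rw [Finset.sum_eq_single t.val]
    · rw [ZMod.natCast_rightInverse t, if_pos rfl]
    · intro ℓ hℓ hne
      rw [if_neg]
      intro h
      exact hne (by rw [← val_cast_S hq hℓ, ← h])
    · intro h
      exact absurd (val_mem_S hq ht) h
  · rw [MulChar.map_nonunit χ ht, zero_mul]
    apply Finset.sum_eq_zero
    intro ℓ hℓ
    rw [if_neg]
    intro h
    exact ht (h ▸ isUnit_cast_S hℓ)

/-- Reindexing a sum over `ZMod q` as a sum over `Icc 1 q`. -/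
lemma reindex {q : ℕ} [NeZero q] (hq : 3 ≤ q) (F : ZMod q → ℂ) :
    ∑ a ∈ Finset.Icc 1 q, F ((a : ℕ) : ZMod q) = ∑ x : ZMod q, F x := by
  refine Finset.sum_nbij' (i := fun a => ((a : ℕ) : ZMod q))
    (j := fun x => if x = 0 then q else x.val) ?_ ?_ ?_ ?_ ?_
  · intro a _; exact Finset.mem_univ _
  · intro x _
    by_cases hx : x = 0
    · rw [if_pos hx, Finset.mem_Icc]
      exact ⟨by omega, le_refl q⟩
    · rw [if_neg hx, Finset.mem_Icc]
      have h1 : x.val ≠ 0 := fun h => hx ((ZMod.val_eq_zero x).mp h)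
      have h2 : x.val < q := ZMod.val_lt x
      exact ⟨by omega, by omega⟩
  · intro a ha
    rw [Finset.mem_Icc] at ha
    by_cases h : ((a : ℕ) : ZMod q) = 0
    · rw [if_pos h]
      have hd : (q : ℕ) ∣ a := (ZMod.natCast_eq_zero_iff a q).mp h
      have := Nat.le_of_dvd (by omega) hd
      omega
    · rw [if_neg h]
      have haq : a < q := by
        rcases lt_or_eq_of_le ha.2 with h' | h'
        · exact h'
        · exfalso; exact h (h' ▸ ZMod.natCast_self q)
      exact ZMod.val_cast_of_lt haq
  · intro x _
    by_cases hx : x = 0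
    · rw [if_pos hx, hx, ZMod.natCast_self]
    · rw [if_neg hx]
      exact ZMod.natCast_rightInverse x
  · intro a _; rfl

end SumAbsAux

/-- For `q ≥ 3` and real `s > 0`, `s ≠ 1`, with
`A(s,ℓ,q) = ∑_{1≤a,b≤q, ab≡ℓ (q)} q^{−2s}(ζ(s,a/q)−1/(s−1))(ζ(s,b/q)−1/(s−1))`:
`∑_{χ ≠ χ₀ (q)} |L(s,χ)|⁴ = φ(q) ∑_{(ℓ,q)=1} |A(s,ℓ,q)|² − |∑_{(ℓ,q)=1} A(s,ℓ,q)|²`. -/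
theorem sum_abs_LFunction_pow_four_eq {q : ℕ} (hq : 3 ≤ q) :
    haveI : NeZero q := ⟨by omega⟩
    ∀ s : ℝ, 0 < s → s ≠ 1 →
      (fun A : ℕ → ℂ =>
        (∑ χ ∈ Finset.univ.filter (fun χ : DirichletCharacter ℂ q => χ ≠ 1),
            ‖χ.LFunction (s : ℂ)‖ ^ 4) =
          (q.totient : ℝ) *
            ∑ ℓ ∈ (Finset.Icc 1 q).filter (fun ℓ => Nat.Coprime ℓ q), ‖A ℓ‖ ^ 2 -
          ‖∑ ℓ ∈ (Finset.Icc 1 q).filter (fun ℓ => Nat.Coprime ℓ q), A ℓ‖ ^ 2)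
      (fun ℓ =>
        ∑ a ∈ Finset.Icc 1 q, ∑ b ∈ Finset.Icc 1 q,
          if ((a * b : ℕ) : ZMod q) = (ℓ : ZMod q) then
            (q : ℂ) ^ (-2 * (s : ℂ)) *
              ((hurwitzZeta ((a / q : ℝ) : UnitAddCircle) (s : ℂ) - 1 / ((s : ℂ) - 1)) *
                (hurwitzZeta ((b / q : ℝ) : UnitAddCircle) (s : ℂ) - 1 / ((s : ℂ) - 1)))
          else 0) := by
  haveI : NeZero q := ⟨by omega⟩
  intro s hs hs1
  set c : ℂ := 1 / ((s : ℂ) - 1) with hc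
  set g : ℕ → ℂ := fun a => hurwitzZeta ((a / q : ℝ) : UnitAddCircle) (s : ℂ) - c with hg
  set A : ℕ → ℂ := fun ℓ =>
    ∑ a ∈ Finset.Icc 1 q, ∑ b ∈ Finset.Icc 1 q,
      if ((a * b : ℕ) : ZMod q) = (ℓ : ZMod q) then
        (q : ℂ) ^ (-2 * (s : ℂ)) * (g a * g b) else 0 with hA
  show (∑ χ ∈ Finset.univ.filter (fun χ : DirichletCharacter ℂ q => χ ≠ 1),
      ‖χ.LFunction (s : ℂ)‖ ^ 4) =
    (q.totient : ℝ) * ∑ ℓ ∈ SumAbsAux.S q, ‖A ℓ‖ ^ 2 - ‖∑ ℓ ∈ SumAbsAux.S q, A ℓ‖ ^ 2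
  have hq0 : (q : ℂ) ≠ 0 := Nat.cast_ne_zero.mpr (by omega)
  -- Step 1: L-function of a nontrivial character as a finite sum.
  have hLsum : ∀ χ : DirichletCharacter ℂ q, χ ≠ 1 →
      χ.LFunction (s : ℂ) =
        (q : ℂ) ^ (-(s : ℂ)) * ∑ a ∈ Finset.Icc 1 q, χ ((a : ℕ) : ZMod q) * g a := by
    intro χ hχ
    have h0 : χ.LFunction (s : ℂ) =
        (q : ℂ) ^ (-(s : ℂ)) * ∑ x : ZMod q, χ x * hurwitzZeta (ZMod.toAddCircle x) (s : ℂ) := rfl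
    have h1 : ∑ a ∈ Finset.Icc 1 q, χ ((a : ℕ) : ZMod q) *
        hurwitzZeta ((a / q : ℝ) : UnitAddCircle) (s : ℂ)
        = ∑ x : ZMod q, χ x * hurwitzZeta (ZMod.toAddCircle x) (s : ℂ) := by
      rw [← SumAbsAux.reindex hq (fun x => χ x * hurwitzZeta (ZMod.toAddCircle x) (s : ℂ))]
      refine Finset.sum_congr rfl fun a _ => ?_
      rw [ZMod.toAddCircle_natCast]
    have h2 : ∑ a ∈ Finset.Icc 1 q, χ ((a : ℕ) : ZMod q) = 0 := by
      rw [SumAbsAux.reindex hq (fun x => χ x)]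
      exact MulChar.sum_eq_zero_of_ne_one hχ
    rw [h0, ← h1]
    congr 1
    rw [show (∑ a ∈ Finset.Icc 1 q, χ ((a : ℕ) : ZMod q) * g a)
        = (∑ a ∈ Finset.Icc 1 q, χ ((a : ℕ) : ZMod q) *
            hurwitzZeta ((a / q : ℝ) : UnitAddCircle) (s : ℂ))
          - (∑ a ∈ Finset.Icc 1 q, χ ((a : ℕ) : ZMod q)) * c by
      rw [Finset.sum_mul, ← Finset.sum_sub_distrib]
      refine Finset.sum_congr rfl fun a _ => ?_
      rw [hg]; ring]
    rw [h2, zero_mul, sub_zero]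
  -- Step 2: the square of the L-function.
  have hL2 : ∀ χ : DirichletCharacter ℂ q, χ ≠ 1 →
      χ.LFunction (s : ℂ) ^ 2 = ∑ ℓ ∈ SumAbsAux.S q, χ ((ℓ : ℕ) : ZMod q) * A ℓ := by
    intro χ hχ
    have hpow : (q : ℂ) ^ (-(s : ℂ)) * (q : ℂ) ^ (-(s : ℂ)) = (q : ℂ) ^ (-2 * (s : ℂ)) := by
      rw [← Complex.cpow_add _ _ hq0]; ring_nf
    calc χ.LFunction (s : ℂ) ^ 2
        = (q : ℂ) ^ (-2 * (s : ℂ)) *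
            ((∑ a ∈ Finset.Icc 1 q, χ ((a : ℕ) : ZMod q) * g a) *
             (∑ b ∈ Finset.Icc 1 q, χ ((b : ℕ) : ZMod q) * g b)) := by
          rw [hLsum χ hχ]; rw [← hpow]; ring
      _ = ∑ a ∈ Finset.Icc 1 q, ∑ b ∈ Finset.Icc 1 q,
            χ (((a * b : ℕ) : ZMod q)) * ((q : ℂ) ^ (-2 * (s : ℂ)) * (g a * g b)) := by
          rw [Finset.sum_mul_sum, Finset.mul_sum]
          refine Finset.sum_congr rfl fun a _ => ?_
          rw [Finset.mul_sum]
          refine Finset.sum_congr rfl fun b _ => ?_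
          rw [Nat.cast_mul, map_mul]
          ring
      _ = ∑ a ∈ Finset.Icc 1 q, ∑ b ∈ Finset.Icc 1 q, ∑ ℓ ∈ SumAbsAux.S q,
            (if ((a * b : ℕ) : ZMod q) = ((ℓ : ℕ) : ZMod q) then
              χ ((ℓ : ℕ) : ZMod q) * ((q : ℂ) ^ (-2 * (s : ℂ)) * (g a * g b)) else 0) := by
          refine Finset.sum_congr rfl fun a _ => Finset.sum_congr rfl fun b _ => ?_
          exact (SumAbsAux.key_sum hq χ (((a * b : ℕ) : ZMod q))
            ((q : ℂ) ^ (-2 * (s : ℂ)) * (g a * g b))).symm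
      _ = ∑ a ∈ Finset.Icc 1 q, ∑ ℓ ∈ SumAbsAux.S q, ∑ b ∈ Finset.Icc 1 q,
            (if ((a * b : ℕ) : ZMod q) = ((ℓ : ℕ) : ZMod q) then
              χ ((ℓ : ℕ) : ZMod q) * ((q : ℂ) ^ (-2 * (s : ℂ)) * (g a * g b)) else 0) :=
          Finset.sum_congr rfl fun a _ => Finset.sum_comm
      _ = ∑ ℓ ∈ SumAbsAux.S q, ∑ a ∈ Finset.Icc 1 q, ∑ b ∈ Finset.Icc 1 q,
            (if ((a * b : ℕ) : ZMod q) = ((ℓ : ℕ) : ZMod q) then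
              χ ((ℓ : ℕ) : ZMod q) * ((q : ℂ) ^ (-2 * (s : ℂ)) * (g a * g b)) else 0) :=
          Finset.sum_comm
      _ = ∑ ℓ ∈ SumAbsAux.S q, χ ((ℓ : ℕ) : ZMod q) * A ℓ := by
          rw [hA]
          simp only [Finset.mul_sum, mul_ite, mul_zero]
  -- conjugation of character values
  have hconj : ∀ (χ : DirichletCharacter ℂ q) (x : ZMod q), IsUnit x →
      (starRingEnd ℂ) (χ x) = χ x⁻¹ := by
    intro χ x hx
    have hx1 : χ x⁻¹ * χ x = 1 := by
      rw [← map_mul, ZMod.inv_mul_of_unit x hx, map_one]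
    have hnorm : ‖χ x‖ = 1 := by
      have := χ.unit_norm_eq_one hx.unit
      rwa [IsUnit.unit_spec] at this
    have hx2 : (starRingEnd ℂ) (χ x) * χ x = 1 := by
      rw [mul_comm, Complex.mul_conj, Complex.normSq_eq_norm_sq, hnorm]
      norm_num
    have hne : χ x ≠ 0 := by
      intro h
      rw [h, mul_zero] at hx2
      exact zero_ne_one hx2
    exact mul_right_cancel₀ hne (hx2.trans hx1.symm)
  -- orthogonality
  have horth : ∀ ℓ ∈ SumAbsAux.S q, ∀ ℓ' ∈ SumAbsAux.S q,
      ∑ χ : DirichletCharacter ℂ q,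
        χ ((ℓ : ℕ) : ZMod q) * (starRingEnd ℂ) (χ ((ℓ' : ℕ) : ZMod q))
        = if ℓ = ℓ' then (q.totient : ℂ) else 0 := by
    intro ℓ hℓ ℓ' hℓ'
    have h1 : ∀ χ : DirichletCharacter ℂ q,
        χ ((ℓ : ℕ) : ZMod q) * (starRingEnd ℂ) (χ ((ℓ' : ℕ) : ZMod q))
          = χ (((ℓ' : ℕ) : ZMod q))⁻¹ * χ ((ℓ : ℕ) : ZMod q) := by
      intro χ
      rw [hconj χ _ (SumAbsAux.isUnit_cast_S hℓ'), mul_comm]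
    rw [Finset.sum_congr rfl fun χ _ => h1 χ]
    rw [DirichletCharacter.sum_char_inv_mul_char_eq ℂ (SumAbsAux.isUnit_cast_S hℓ') _]
    congr 1
    simp only [eq_iff_iff]
    constructor
    · intro h
      rw [← SumAbsAux.val_cast_S hq hℓ, ← SumAbsAux.val_cast_S hq hℓ', h]
    · intro h; rw [h]
  -- Define T χ and compute the sum over all characters.
  set T : DirichletCharacter ℂ q → ℂ :=
    fun χ => ∑ ℓ ∈ SumAbsAux.S q, χ ((ℓ : ℕ) : ZMod q) * A ℓ with hT
  have hmain : ∑ χ : DirichletCharacter ℂ q, T χ * (starRingEnd ℂ) (T χ)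
      = (q.totient : ℂ) * ∑ ℓ ∈ SumAbsAux.S q, A ℓ * (starRingEnd ℂ) (A ℓ) := by
    calc ∑ χ : DirichletCharacter ℂ q, T χ * (starRingEnd ℂ) (T χ)
        = ∑ χ : DirichletCharacter ℂ q, ∑ ℓ ∈ SumAbsAux.S q, ∑ ℓ' ∈ SumAbsAux.S q,
            (χ ((ℓ : ℕ) : ZMod q) * (starRingEnd ℂ) (χ ((ℓ' : ℕ) : ZMod q))) *
              (A ℓ * (starRingEnd ℂ) (A ℓ')) := by
          refine Finset.sum_congr rfl fun χ _ => ?_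
          rw [hT]
          dsimp only
          rw [map_sum, Finset.sum_mul_sum]
          refine Finset.sum_congr rfl fun ℓ _ => Finset.sum_congr rfl fun ℓ' _ => ?_
          rw [map_mul]
          ring
      _ = ∑ ℓ ∈ SumAbsAux.S q, ∑ χ : DirichletCharacter ℂ q, ∑ ℓ' ∈ SumAbsAux.S q,
            (χ ((ℓ : ℕ) : ZMod q) * (starRingEnd ℂ) (χ ((ℓ' : ℕ) : ZMod q))) *
              (A ℓ * (starRingEnd ℂ) (A ℓ')) := Finset.sum_comm
      _ = ∑ ℓ ∈ SumAbsAux.S q, ∑ ℓ' ∈ SumAbsAux.S q, ∑ χ : DirichletCharacter ℂ q,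
            (χ ((ℓ : ℕ) : ZMod q) * (starRingEnd ℂ) (χ ((ℓ' : ℕ) : ZMod q))) *
              (A ℓ * (starRingEnd ℂ) (A ℓ')) :=
          Finset.sum_congr rfl fun ℓ _ => Finset.sum_comm
      _ = ∑ ℓ ∈ SumAbsAux.S q, ∑ ℓ' ∈ SumAbsAux.S q,
            (if ℓ = ℓ' then (q.totient : ℂ) else 0) * (A ℓ * (starRingEnd ℂ) (A ℓ')) := by
          refine Finset.sum_congr rfl fun ℓ hℓ => Finset.sum_congr rfl fun ℓ' hℓ' => ?_
          rw [← Finset.sum_mul, horth ℓ hℓ ℓ' hℓ']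
      _ = ∑ ℓ ∈ SumAbsAux.S q, (q.totient : ℂ) * (A ℓ * (starRingEnd ℂ) (A ℓ)) := by
          refine Finset.sum_congr rfl fun ℓ hℓ => ?_
          simp only [ite_mul, zero_mul]
          rw [Finset.sum_ite_eq (SumAbsAux.S q) ℓ
            (fun ℓ' => (q.totient : ℂ) * (A ℓ * (starRingEnd ℂ) (A ℓ'))), if_pos hℓ]
      _ = (q.totient : ℂ) * ∑ ℓ ∈ SumAbsAux.S q, A ℓ * (starRingEnd ℂ) (A ℓ) := by
          rw [Finset.mul_sum]
  have hT1 : T 1 = ∑ ℓ ∈ SumAbsAux.S q, A ℓ := by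
    rw [hT]
    refine Finset.sum_congr rfl fun ℓ hℓ => ?_
    rw [MulChar.one_apply (SumAbsAux.isUnit_cast_S hℓ), one_mul]
  have hzz : ∀ z : ℂ, ((‖z‖ ^ 2 : ℝ) : ℂ) = z * (starRingEnd ℂ) z := by
    intro z
    rw [Complex.mul_conj, Complex.normSq_eq_norm_sq]
  -- final assembly
  apply Complex.ofReal_injective
  have hLHS : ((∑ χ ∈ Finset.univ.filter (fun χ : DirichletCharacter ℂ q => χ ≠ 1),
      ‖χ.LFunction (s : ℂ)‖ ^ 4 : ℝ) : ℂ)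
      = ∑ χ ∈ Finset.univ.filter (fun χ : DirichletCharacter ℂ q => χ ≠ 1),
          T χ * (starRingEnd ℂ) (T χ) := by
    rw [Complex.ofReal_sum]
    refine Finset.sum_congr rfl fun χ hχ => ?_
    have hχ1 : χ ≠ 1 := (Finset.mem_filter.mp hχ).2
    have h4 : ‖χ.LFunction (s : ℂ)‖ ^ 4 = ‖χ.LFunction (s : ℂ) ^ 2‖ ^ 2 := by
      rw [norm_pow]; ring
    rw [h4, hzz, hL2 χ hχ1]
  rw [hLHS]
  have hfilter : Finset.univ.filter (fun χ : DirichletCharacter ℂ q => χ ≠ 1)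
      = Finset.univ.erase 1 := Finset.filter_ne' _ _
  rw [hfilter, Finset.sum_erase_eq_sub (Finset.mem_univ (1 : DirichletCharacter ℂ q)),
    hmain, hT1]
  rw [Complex.ofReal_sub, Complex.ofReal_mul, Complex.ofReal_sum, Complex.ofReal_natCast]
  rw [hzz (∑ ℓ ∈ SumAbsAux.S q, A ℓ)]
  congr 1
  congr 1
  exact (Finset.sum_congr rfl fun ℓ _ => hzz (A ℓ)).symm
end

section
/- Let q ≥ 3 be an integer and for n ≥ 1 set a_q(n) = #{(u,v) : 1 ≤ u,v ≤ q, uv = n}. There is an absolute constant C > 0 such that for all q ≥ 3, ∑_{ℓ=1, (ℓ,q)=1}^{q} (∑_{q < n ≤ q², n ≡ ℓ (mod q)} a_q(n)/n)² ≤ C · log⁵(q+2)/q. -/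
open Finset

/-- `a_q(n) = #{(u,v) : 1 ≤ u,v ≤ q, uv = n}`, the number of ordered factorizations
of `n` with both factors between `1` and `q`. -/
def aFac (q n : ℕ) : ℕ :=
  ((Finset.Icc 1 q ×ˢ Finset.Icc 1 q).filter (fun p => p.1 * p.2 = n)).card

lemma sum_inj_le {α β : Type*} [DecidableEq β] (s : Finset α) (t : Finset β)
    (i : α → β) (hi : Set.InjOn i s) (hmem : ∀ a ∈ s, i a ∈ t)
    (f : α → ℝ) (g : β → ℝ) (hg : ∀ b ∈ t, 0 ≤ g b)
    (hfg : ∀ a ∈ s, f a ≤ g (i a)) : ∑ a ∈ s, f a ≤ ∑ b ∈ t, g b := by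
  calc ∑ a ∈ s, f a ≤ ∑ a ∈ s, g (i a) := Finset.sum_le_sum hfg
    _ = ∑ b ∈ s.image i, g b := (Finset.sum_image (fun x hx y hy h => hi hx hy h)).symm
    _ ≤ ∑ b ∈ t, g b := Finset.sum_le_sum_of_subset_of_nonneg
        (Finset.image_subset_iff.2 hmem) (fun b hb _ => hg b hb)

lemma cast_icc_inj {q a b : ℕ} (ha : a ∈ Finset.Icc 1 q) (hb : b ∈ Finset.Icc 1 q)
    (h : (a : ZMod q) = (b : ZMod q)) : a = b := by
  simp only [Finset.mem_Icc] at ha hb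
  have h' : a % q = b % q := by
    rwa [ZMod.natCast_eq_natCast_iff, Nat.ModEq] at h
  rcases eq_or_lt_of_le ha.2 with h1 | h1 <;> rcases eq_or_lt_of_le hb.2 with h2 | h2
  · omega
  · rw [h1, Nat.mod_self, Nat.mod_eq_of_lt h2] at h'; omega
  · rw [h2, Nat.mod_self, Nat.mod_eq_of_lt h1] at h'; omega
  · rw [Nat.mod_eq_of_lt h1, Nat.mod_eq_of_lt h2] at h'; omega

lemma harm_bound (q : ℕ) (hq : 3 ≤ q) :
    ∑ j ∈ Finset.Icc 1 q, (1:ℝ)/j ≤ 2 * Real.log (q + 2) := by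
  have h1 : ∑ j ∈ Finset.Icc 1 q, (1:ℝ)/j = (harmonic q : ℝ) := by
    rw [harmonic_eq_sum_Icc]
    push_cast
    simp [one_div]
  have h2 : (harmonic q : ℝ) ≤ 1 + Real.log q := harmonic_le_one_add_log q
  have h3 : (1:ℝ) ≤ Real.log (q + 2) := by
    rw [← Real.log_exp 1]
    apply Real.log_le_log (Real.exp_pos 1)
    have := Real.exp_one_lt_d9
    have : (q:ℝ) ≥ 3 := by exact_mod_cast hq
    nlinarith
  have h4 : Real.log q ≤ Real.log (q + 2) := by
    apply Real.log_le_log (by positivity : (0:ℝ) < q)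
    linarith [show (0:ℝ) ≤ 2 by norm_num]
  linarith

lemma inner_residue (q : ℕ) (hq : 0 < q) (r : ZMod q) :
    ∑ m ∈ (Finset.Ioc q (q^2)).filter (fun m : ℕ => (m : ZMod q) = r), (1:ℝ)/m
      ≤ (∑ j ∈ Finset.Icc 1 q, (1:ℝ)/j) / q := by
  have key : ∑ m ∈ (Finset.Ioc q (q^2)).filter (fun m : ℕ => (m : ZMod q) = r), (1:ℝ)/m
      ≤ ∑ j ∈ Finset.Icc 1 q, (1:ℝ)/(q*j) := by
    apply sum_inj_le _ _ (fun m => m / q)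
    · intro m hm m' hm' hmm
      simp only [Finset.coe_filter, Set.mem_setOf_eq, Finset.mem_Ioc] at hm hm'
      have e1 : m % q = m' % q := by
        have : (m : ZMod q) = (m' : ZMod q) := hm.2.trans hm'.2.symm
        rwa [ZMod.natCast_eq_natCast_iff, Nat.ModEq] at this
      have := Nat.div_add_mod m q
      have := Nat.div_add_mod m' q
      have hmm2 : m / q = m' / q := by simpa using hmm
      have hmm3 : q * (m / q) = q * (m' / q) := by rw [hmm2]
      omega
    · intro m hm
      simp only [Finset.mem_filter, Finset.mem_Ioc] at hm
      rw [Finset.mem_Icc]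
      constructor
      · rw [Nat.one_le_div_iff hq]; omega
      · calc m / q ≤ q^2 / q := Nat.div_le_div_right hm.1.2
          _ = q := by rw [pow_two, Nat.mul_div_cancel_left _ hq]
    · intro j hj
      positivity
    · intro m hm
      simp only [Finset.mem_filter, Finset.mem_Ioc] at hm
      have h1 : 0 < q * (m / q) := by
        have : 1 ≤ m / q := by rw [Nat.one_le_div_iff hq]; omega
        positivity
      have h2 : q * (m / q) ≤ m := Nat.mul_div_le m q
      rw [show ((q:ℝ) * (m/q : ℕ) : ℝ) = ((q * (m/q) : ℕ) : ℝ) by push_cast; ring]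
      apply one_div_le_one_div_of_le
      · exact_mod_cast h1
      · exact_mod_cast h2
  refine key.trans (le_of_eq ?_)
  rw [Finset.sum_div]
  apply Finset.sum_congr rfl
  intro j hj
  rw [div_div, mul_comm]

lemma quad_sum (q : ℕ) (hq : 0 < q) :
    ∑ n ∈ Finset.Ioc q (q^2), ((aFac q n : ℝ))^2 / n
      ≤ (∑ j ∈ Finset.Icc 1 q, (1:ℝ)/j)^4 := by
  classical
  set sq : Finset (ℕ × ℕ) := Finset.Icc 1 q ×ˢ Finset.Icc 1 q with hsq
  set F : ℕ → Finset (ℕ × ℕ) := fun n => sq.filter (fun y => y.1 * y.2 = n) with hF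
  set U : Finset ((ℕ×ℕ)×(ℕ×ℕ)) := (Finset.Ioc q (q^2)).biUnion (fun n => F n ×ˢ F n) with hU
  have hdisj : (↑(Finset.Ioc q (q^2)) : Set ℕ).PairwiseDisjoint (fun n => F n ×ˢ F n) := by
    intro n _ n' _ hnn'
    apply Finset.disjoint_left.mpr
    rintro p hp hp'
    simp only [hF, Finset.mem_product, Finset.mem_filter] at hp hp'
    exact hnn' (hp.1.2.symm.trans hp'.1.2)
  have e1 : ∑ n ∈ Finset.Ioc q (q^2), ((aFac q n : ℝ))^2 / n
      = ∑ p ∈ U, (1:ℝ)/(p.1.1*p.1.2) := by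
    rw [hU, Finset.sum_biUnion hdisj]
    apply Finset.sum_congr rfl
    intro n hn
    have h1 : ∀ p ∈ F n ×ˢ F n, (1:ℝ)/(p.1.1*p.1.2) = (1:ℝ)/n := by
      intro p hp
      simp only [hF, Finset.mem_product, Finset.mem_filter] at hp
      rw [← hp.1.2]
      push_cast
      ring
    rw [Finset.sum_congr rfl h1, Finset.sum_const, Finset.card_product]
    have h2 : (F n).card = aFac q n := by rw [hF, hsq]; rfl
    rw [h2, nsmul_eq_mul]
    push_cast
    ring
  rw [e1]
  set i : (ℕ×ℕ)×(ℕ×ℕ) → (ℕ×ℕ)×(ℕ×ℕ) := fun p =>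
    ((Nat.gcd p.1.1 p.2.1, p.1.1 / Nat.gcd p.1.1 p.2.1),
     (p.2.1 / Nat.gcd p.1.1 p.2.1, p.1.2 / (p.2.1 / Nat.gcd p.1.1 p.2.1))) with hi
  set G : (ℕ×ℕ)×(ℕ×ℕ) → ℝ := fun y => (1:ℝ)/y.1.1 * (1/y.1.2) * (1/y.2.1 * (1/y.2.2)) with hG
  have key : ∀ p ∈ U, ∃ g a b m : ℕ, i p = ((g,a),(b,m)) ∧
      g*a = p.1.1 ∧ b*m = p.1.2 ∧ g*b = p.2.1 ∧ a*m = p.2.2 ∧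
      g ∈ Finset.Icc 1 q ∧ a ∈ Finset.Icc 1 q ∧ b ∈ Finset.Icc 1 q ∧ m ∈ Finset.Icc 1 q := by
    rintro ⟨⟨u, v⟩, u', v'⟩ hp
    rw [hU, Finset.mem_biUnion] at hp
    obtain ⟨n, hn, hp⟩ := hp
    simp only [hF, hsq, Finset.mem_product, Finset.mem_filter, Finset.mem_Icc] at hp
    obtain ⟨⟨⟨⟨hu1, hu2⟩, hv1, hv2⟩, huv⟩, ⟨⟨hu'1, hu'2⟩, hv'1, hv'2⟩, hu'v'⟩ := hp
    have heq : u * v = u' * v' := huv.trans hu'v'.symm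
    have hgpos : 0 < Nat.gcd u u' := Nat.gcd_pos_of_pos_left _ (by omega)
    have hga : Nat.gcd u u' * (u / Nat.gcd u u') = u := Nat.mul_div_cancel' (Nat.gcd_dvd_left u u')
    have hgb : Nat.gcd u u' * (u' / Nat.gcd u u') = u' := Nat.mul_div_cancel' (Nat.gcd_dvd_right u u')
    have hcop : Nat.Coprime (u / Nat.gcd u u') (u' / Nat.gcd u u') := Nat.coprime_div_gcd_div_gcd hgpos
    have hav : (u / Nat.gcd u u') * v = (u' / Nat.gcd u u') * v' := by
      apply Nat.eq_of_mul_eq_mul_left hgpos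
      rw [← mul_assoc, ← mul_assoc, hga, hgb]
      exact heq
    have hbv : (u' / Nat.gcd u u') ∣ v :=
      Nat.Coprime.dvd_of_dvd_mul_left hcop.symm ⟨v', hav⟩
    have hbm : (u' / Nat.gcd u u') * (v / (u' / Nat.gcd u u')) = v := Nat.mul_div_cancel' hbv
    have hbpos : 0 < u' / Nat.gcd u u' := by
      rcases Nat.eq_zero_or_pos (u' / Nat.gcd u u') with h | h
      · rw [h, mul_zero] at hgb; omega
      · exact h
    have hapos : 0 < u / Nat.gcd u u' := by
      rcases Nat.eq_zero_or_pos (u / Nat.gcd u u') with h | h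
      · rw [h, mul_zero] at hga; omega
      · exact h
    have hmpos : 0 < v / (u' / Nat.gcd u u') := by
      rcases Nat.eq_zero_or_pos (v / (u' / Nat.gcd u u')) with h | h
      · rw [h, mul_zero] at hbm; omega
      · exact h
    have hamv : (u / Nat.gcd u u') * (v / (u' / Nat.gcd u u')) = v' := by
      apply Nat.eq_of_mul_eq_mul_left hbpos
      calc (u' / Nat.gcd u u') * ((u / Nat.gcd u u') * (v / (u' / Nat.gcd u u')))
          = (u / Nat.gcd u u') * ((u' / Nat.gcd u u') * (v / (u' / Nat.gcd u u'))) := by ring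
        _ = (u / Nat.gcd u u') * v := by rw [hbm]
        _ = (u' / Nat.gcd u u') * v' := hav
    refine ⟨Nat.gcd u u', u / Nat.gcd u u', u' / Nat.gcd u u', v / (u' / Nat.gcd u u'),
      rfl, hga, hbm, hgb, hamv, ?_, ?_, ?_, ?_⟩ <;> rw [Finset.mem_Icc]
    · exact ⟨hgpos, le_trans (Nat.le_of_dvd (by omega) (Nat.gcd_dvd_left u u')) hu2⟩
    · exact ⟨hapos, le_trans (Nat.div_le_self _ _) hu2⟩
    · exact ⟨hbpos, le_trans (Nat.div_le_self _ _) hu'2⟩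
    · exact ⟨hmpos, le_trans (Nat.div_le_self _ _) hv2⟩
  have main : ∑ p ∈ U, (1:ℝ)/(p.1.1*p.1.2) ≤ ∑ y ∈ sq ×ˢ sq, G y := by
    apply sum_inj_le U (sq ×ˢ sq) i
    · intro p hp p' hp' h
      obtain ⟨g, a, b, m, hip, h1, h2, h3, h4, -, -, -, -⟩ := key p hp
      obtain ⟨g', a', b', m', hip', h1', h2', h3', h4', -, -, -, -⟩ := key p' hp'
      rw [hip, hip', Prod.ext_iff, Prod.ext_iff, Prod.ext_iff] at h
      obtain ⟨⟨hgg, haa⟩, hbb, hmm⟩ := h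
      simp only at hgg haa hbb hmm
      have k1 : p.1.1 = p'.1.1 := by rw [← h1, ← h1', hgg, haa]
      have k2 : p.1.2 = p'.1.2 := by rw [← h2, ← h2', hbb, hmm]
      have k3 : p.2.1 = p'.2.1 := by rw [← h3, ← h3', hgg, hbb]
      have k4 : p.2.2 = p'.2.2 := by rw [← h4, ← h4', haa, hmm]
      simp only [Prod.ext_iff]
      exact ⟨⟨k1, k2⟩, k3, k4⟩
    · intro p hp
      obtain ⟨g, a, b, m, hip, -, -, -, -, hgm, ham, hbm, hmm⟩ := key p hp
      rw [hip, hsq]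
      simp only [Finset.mem_product]
      exact ⟨⟨hgm, ham⟩, hbm, hmm⟩
    · intro y hy
      rw [hG]
      positivity
    · intro p hp
      obtain ⟨g, a, b, m, hip, h1, h2, -, -, hgm, ham, hbm, hmm⟩ := key p hp
      rw [hip, hG]
      simp only [Finset.mem_Icc] at hgm ham hbm hmm
      simp only
      apply le_of_eq
      rw [← h1, ← h2]
      have hg0 : ((g:ℝ)) ≠ 0 := Nat.cast_ne_zero.mpr (by omega)
      have ha0 : ((a:ℝ)) ≠ 0 := Nat.cast_ne_zero.mpr (by omega)
      have hb0 : ((b:ℝ)) ≠ 0 := Nat.cast_ne_zero.mpr (by omega)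
      have hm0 : ((m:ℝ)) ≠ 0 := Nat.cast_ne_zero.mpr (by omega)
      push_cast
      field_simp
  refine main.trans (le_of_eq ?_)
  have s1 : ∑ z ∈ sq, ((1:ℝ)/z.1 * (1/z.2))
      = (∑ j ∈ Finset.Icc 1 q, (1:ℝ)/j) * (∑ j ∈ Finset.Icc 1 q, (1:ℝ)/j) := by
    rw [hsq, Finset.sum_mul_sum, Finset.sum_product]
  have s2 : ∑ y ∈ sq ×ˢ sq, G y
      = (∑ z ∈ sq, ((1:ℝ)/z.1 * (1/z.2))) * (∑ z ∈ sq, ((1:ℝ)/z.1 * (1/z.2))) := by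
    rw [Finset.sum_mul_sum, Finset.sum_product]
  rw [s2, s1]
  ring

/-- There is an absolute constant `C > 0` such that for all `q ≥ 3`,
`∑_{(ℓ,q)=1, ℓ≤q} (∑_{q<n≤q², n≡ℓ (q)} a_q(n)/n)² ≤ C log⁵(q+2)/q`. -/
theorem sum_sq_tail_aFac_le : ∃ C : ℝ, 0 < C ∧ ∀ q : ℕ, 3 ≤ q →
    ∑ ℓ ∈ (Finset.Icc 1 q).filter (fun ℓ => Nat.Coprime ℓ q),
      (∑ n ∈ (Finset.Ioc q (q ^ 2)).filter (fun n : ℕ => ((n : ZMod q)) = (ℓ : ZMod q)),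
        (aFac q n : ℝ) / n) ^ 2 ≤
      C * Real.log (q + 2) ^ 5 / q := by
  classical
  refine ⟨32, by norm_num, fun q hq => ?_⟩
  have hq0 : 0 < q := by omega
  set H : ℝ := ∑ j ∈ Finset.Icc 1 q, (1:ℝ)/j with hH
  have hH0 : 0 ≤ H := by rw [hH]; positivity
  set T : Finset ℕ := Finset.Ioc q (q^2) with hT
  set L : Finset ℕ := (Finset.Icc 1 q).filter (fun ℓ => Nat.Coprime ℓ q) with hL
  set f : ℕ → ℝ := fun n => (aFac q n : ℝ) / n with hf
  have hf0 : ∀ n, 0 ≤ f n := fun n => by rw [hf]; positivity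
  set R : ℕ → Finset ℕ := fun k => T.filter (fun x : ℕ => (x : ZMod q) = (k : ZMod q)) with hR
  set A : ℕ → ℝ := fun k => ((aFac q k : ℝ))^2 with hA
  have hA0 : ∀ k, 0 ≤ A k := fun k => by rw [hA]; positivity
  -- Step A : expand squares and drop ℓ
  have expand : ∀ ℓ : ℕ,
      (∑ n ∈ T.filter (fun n : ℕ => ((n : ZMod q)) = (ℓ : ZMod q)), f n)^2
      = ∑ m ∈ T, ∑ n ∈ T,
          (if ((m : ZMod q) = (ℓ : ZMod q) ∧ (n : ZMod q) = (ℓ : ZMod q)) then f m * f n else 0) := by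
    intro ℓ
    rw [pow_two, Finset.sum_mul_sum, Finset.sum_filter]
    apply Finset.sum_congr rfl
    intro m _
    by_cases hm : (m : ZMod q) = (ℓ : ZMod q)
    · rw [if_pos hm, Finset.sum_filter]
      apply Finset.sum_congr rfl
      intro n _
      by_cases hn : (n : ZMod q) = (ℓ : ZMod q)
      · rw [if_pos hn, if_pos ⟨hm, hn⟩]
      · rw [if_neg hn, if_neg (fun h => hn h.2)]
    · rw [if_neg hm]
      symm
      apply Finset.sum_eq_zero
      intro n _
      exact if_neg (fun h => hm h.1)
  -- pointwise bound over ℓ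
  have pointwise : ∀ m ∈ T, ∀ n ∈ T,
      (∑ ℓ ∈ L, if ((m : ZMod q) = (ℓ : ZMod q) ∧ (n : ZMod q) = (ℓ : ZMod q))
        then f m * f n else 0)
      ≤ if (n : ZMod q) = (m : ZMod q) then f m * f n else 0 := by
    intro m _ n _
    by_cases hmn : (n : ZMod q) = (m : ZMod q)
    · rw [if_pos hmn, ← Finset.sum_filter (fun ℓ : ℕ => ((m : ZMod q) = (ℓ : ZMod q) ∧
        (n : ZMod q) = (ℓ : ZMod q))) (fun _ => f m * f n), Finset.sum_const, nsmul_eq_mul]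
      have hcard : (L.filter (fun ℓ : ℕ => ((m : ZMod q) = (ℓ : ZMod q) ∧
          (n : ZMod q) = (ℓ : ZMod q)))).card ≤ 1 := by
        apply Finset.card_le_one.mpr
        intro a ha b hb
        rw [Finset.mem_filter] at ha hb
        exact cast_icc_inj (Finset.mem_filter.mp ha.1).1
          (Finset.mem_filter.mp hb.1).1 (ha.2.1.symm.trans hb.2.1)
      have hcard2 : ((L.filter (fun ℓ : ℕ => ((m : ZMod q) = (ℓ : ZMod q) ∧
          (n : ZMod q) = (ℓ : ZMod q)))).card : ℝ) ≤ 1 := by exact_mod_cast hcard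
      calc _ ≤ 1 * (f m * f n) :=
            mul_le_mul_of_nonneg_right hcard2 (mul_nonneg (hf0 m) (hf0 n))
        _ = f m * f n := one_mul _
    · rw [if_neg hmn]
      apply le_of_eq
      apply Finset.sum_eq_zero
      intro ℓ _
      exact if_neg (fun h => hmn (h.2.trans h.1.symm))
  -- Step A conclusion
  have stepA : ∑ ℓ ∈ L, (∑ n ∈ T.filter (fun n : ℕ => ((n : ZMod q)) = (ℓ : ZMod q)), f n)^2
      ≤ ∑ m ∈ T, ∑ n ∈ R m, f m * f n := by
    calc ∑ ℓ ∈ L, (∑ n ∈ T.filter (fun n : ℕ => ((n : ZMod q)) = (ℓ : ZMod q)), f n)^2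
        = ∑ ℓ ∈ L, ∑ m ∈ T, ∑ n ∈ T,
            (if ((m : ZMod q) = (ℓ : ZMod q) ∧ (n : ZMod q) = (ℓ : ZMod q))
              then f m * f n else 0) := Finset.sum_congr rfl (fun ℓ _ => expand ℓ)
      _ = ∑ m ∈ T, ∑ ℓ ∈ L, ∑ n ∈ T, _ := Finset.sum_comm
      _ = ∑ m ∈ T, ∑ n ∈ T, ∑ ℓ ∈ L, _ := Finset.sum_congr rfl (fun m _ => Finset.sum_comm)
      _ ≤ ∑ m ∈ T, ∑ n ∈ T, (if (n : ZMod q) = (m : ZMod q) then f m * f n else 0) :=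
          Finset.sum_le_sum (fun m hm => Finset.sum_le_sum (fun n hn => pointwise m hm n hn))
      _ = ∑ m ∈ T, ∑ n ∈ R m, f m * f n := by
          apply Finset.sum_congr rfl
          intro m _
          rw [hR, ← Finset.sum_filter]
  -- Step B
  have ptB : ∀ m ∈ T, ∀ n ∈ R m,
      f m * f n ≤ (A m / m) * (1/n) / 2 + (A n / n) * (1/m) / 2 := by
    intro m hm n hn
    simp only [hT, Finset.mem_Ioc] at hm
    simp only [hR, hT, Finset.mem_filter, Finset.mem_Ioc] at hn
    have hm' : (0:ℝ) < m := by exact_mod_cast (by omega : 0 < m)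
    have hn' : (0:ℝ) < n := by exact_mod_cast (by omega : 0 < n)
    have key : (A m / m) * (1/n) / 2 + (A n / n) * (1/m) / 2
        = ((aFac q m : ℝ)^2 + (aFac q n : ℝ)^2) / 2 / ((m:ℝ) * n) := by
      rw [hA]
      field_simp
    rw [key, hf]
    simp only
    rw [div_mul_div_comm]
    gcongr
    nlinarith [sq_nonneg ((aFac q m : ℝ) - (aFac q n : ℝ))]
  have stepB : ∑ m ∈ T, ∑ n ∈ R m, f m * f n
      ≤ (H/q) * ∑ k ∈ T, A k / k := by
    have hsplit : ∑ m ∈ T, ∑ n ∈ R m, f m * f n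
        ≤ ∑ m ∈ T, ∑ n ∈ R m, ((A m / m) * (1/n) / 2)
          + ∑ m ∈ T, ∑ n ∈ R m, ((A n / n) * (1/m) / 2) := by
      rw [← Finset.sum_add_distrib]
      apply Finset.sum_le_sum
      intro m hm
      rw [← Finset.sum_add_distrib]
      exact Finset.sum_le_sum (fun n hn => ptB m hm n hn)
    have hin : ∀ k ∈ T, ∑ n ∈ R k, (1:ℝ)/n ≤ H/q := fun k _ =>
      inner_residue q hq0 ((k : ZMod q))
    have hV1 : ∑ m ∈ T, ∑ n ∈ R m, ((A m / m) * (1/n) / 2)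
        ≤ ∑ m ∈ T, (A m / m) / 2 * (H/q) := by
      apply Finset.sum_le_sum
      intro m hm
      have e : ∑ n ∈ R m, ((A m / m) * (1/n) / 2)
          = (A m / m) / 2 * ∑ n ∈ R m, (1:ℝ)/n := by
        rw [Finset.mul_sum]
        exact Finset.sum_congr rfl (fun n _ => by ring)
      rw [e]
      exact mul_le_mul_of_nonneg_left (hin m hm) (by positivity)
    have hswap : ∑ m ∈ T, ∑ n ∈ R m, ((A n / n) * (1/m) / 2)
        = ∑ n ∈ T, ∑ m ∈ R n, ((A n / n) * (1/m) / 2) := by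
      apply Finset.sum_comm'
      intro x y
      simp only [hR, Finset.mem_filter]
      constructor
      · rintro ⟨h1, h2, h3⟩; exact ⟨⟨h1, h3.symm⟩, h2⟩
      · rintro ⟨⟨h1, h3⟩, h2⟩; exact ⟨h1, h2, h3.symm⟩
    have hV2 : ∑ n ∈ T, ∑ m ∈ R n, ((A n / n) * (1/m) / 2)
        ≤ ∑ n ∈ T, (A n / n) / 2 * (H/q) := by
      apply Finset.sum_le_sum
      intro n hn
      have e : ∑ m ∈ R n, ((A n / n) * (1/m) / 2)
          = (A n / n) / 2 * ∑ m ∈ R n, (1:ℝ)/m := by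
        rw [Finset.mul_sum]
        exact Finset.sum_congr rfl (fun m _ => by ring)
      rw [e]
      exact mul_le_mul_of_nonneg_left (hin n hn) (by positivity)
    calc ∑ m ∈ T, ∑ n ∈ R m, f m * f n
        ≤ ∑ m ∈ T, ∑ n ∈ R m, ((A m / m) * (1/n) / 2)
          + ∑ m ∈ T, ∑ n ∈ R m, ((A n / n) * (1/m) / 2) := hsplit
      _ ≤ ∑ m ∈ T, (A m / m) / 2 * (H/q) + ∑ n ∈ T, (A n / n) / 2 * (H/q) := by
          rw [hswap]; exact add_le_add hV1 hV2
      _ = (H/q) * ∑ k ∈ T, A k / k := by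
          rw [← Finset.sum_add_distrib, Finset.mul_sum]
          exact Finset.sum_congr rfl (fun k _ => by ring)
  -- conclusion
  have hB : ∑ k ∈ T, A k / k ≤ H^4 := quad_sum q hq0
  have hHq : 0 ≤ H / q := by positivity
  have hlog : H ≤ 2 * Real.log (q + 2) := harm_bound q hq
  have hqR : (0:ℝ) < q := by exact_mod_cast hq0
  have final : ∑ ℓ ∈ L, (∑ n ∈ T.filter (fun n : ℕ => ((n : ZMod q)) = (ℓ : ZMod q)), f n)^2
      ≤ 32 * Real.log (q + 2) ^ 5 / q := by
    calc ∑ ℓ ∈ L, (∑ n ∈ T.filter (fun n : ℕ => ((n : ZMod q)) = (ℓ : ZMod q)), f n)^2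
        ≤ ∑ m ∈ T, ∑ n ∈ R m, f m * f n := stepA
      _ ≤ (H/q) * ∑ k ∈ T, A k / k := stepB
      _ ≤ (H/q) * H^4 := mul_le_mul_of_nonneg_left hB hHq
      _ = H^5/q := by ring
      _ ≤ (2 * Real.log (q + 2))^5 / q := by
          gcongr
      _ = 32 * Real.log (q + 2) ^ 5 / q := by ring
  exact final
end

section
/- Let q ≥ 3 be an integer and for n ≥ 1 set a_q(n) = #{(u,v) : 1 ≤ u,v ≤ q, uv = n}. There is an absolute constant C > 0 such that for all q ≥ 3, |∑_{ℓ=1, (ℓ,q)=1}^{q} (∑_{n ≤ q², n ≡ ℓ (mod q)} a_q(n)/n)² − ∑_{ℓ=1, (ℓ,q)=1}^{q} d(ℓ)²/ℓ²| ≤ C · log⁴(q+2)/√q, where d is the divisor function. -/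
open Finset

private lemma pow4_le_41_mul_two_pow (a : ℕ) : (a + 1) ^ 4 ≤ 41 * 2 ^ a := by
  rcases lt_or_ge a 5 with h | h
  · interval_cases a <;> norm_num
  · induction a, h using Nat.le_induction with
    | base => norm_num
    | succ a ha ih =>
      have hsq : 25 ≤ a * a := Nat.mul_le_mul ha ha
      have h2 : (a + 1 + 1) ^ 4 ≤ 2 * (a + 1) ^ 4 := by nlinarith [ha, hsq]
      calc (a + 1 + 1) ^ 4 ≤ 2 * (a + 1) ^ 4 := h2
        _ ≤ 2 * (41 * 2 ^ a) := by omega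
        _ = 41 * 2 ^ (a + 1) := by ring

private lemma pow4_le_17_pow (a : ℕ) : (a + 1) ^ 4 ≤ 17 ^ a := by
  induction a with
  | zero => norm_num
  | succ a ih =>
    have h1 : (a + 1 + 1) ^ 4 ≤ 16 * (a + 1) ^ 4 := by
      calc (a + 1 + 1) ^ 4 ≤ (2 * (a + 1)) ^ 4 := Nat.pow_le_pow_left (by omega) 4
        _ = 16 * (a + 1) ^ 4 := by ring
    calc (a + 1 + 1) ^ 4 ≤ 16 * (a + 1) ^ 4 := h1
      _ ≤ 16 * 17 ^ a := Nat.mul_le_mul_left _ ih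
      _ ≤ 17 * 17 ^ a := Nat.mul_le_mul_right _ (by norm_num)
      _ = 17 ^ (a + 1) := by ring

private lemma prime_pow_bound {p : ℕ} (hp : p.Prime) (a : ℕ) :
    (a + 1) ^ 4 ≤ (if p ≤ 16 then 41 else 1) * p ^ a := by
  by_cases h : p ≤ 16
  · simp only [h, if_pos]
    calc (a + 1) ^ 4 ≤ 41 * 2 ^ a := pow4_le_41_mul_two_pow a
      _ ≤ 41 * p ^ a := Nat.mul_le_mul_left _ (Nat.pow_le_pow_left hp.two_le a)
  · simp only [h, if_neg, not_false_iff, one_mul]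
    calc (a + 1) ^ 4 ≤ 17 ^ a := pow4_le_17_pow a
      _ ≤ p ^ a := Nat.pow_le_pow_left (by omega) a

private lemma card_divisors_pow4_le (n : ℕ) : n.divisors.card ^ 4 ≤ 41 ^ 17 * n := by
  rcases Nat.eq_zero_or_pos n with rfl | hn
  · simp
  have hn0 : n ≠ 0 := hn.ne'
  rw [Nat.card_divisors hn0]
  have hprod : ∏ p ∈ n.primeFactors, p ^ n.factorization p = n := by
    rw [← Nat.support_factorization]
    exact Nat.factorization_prod_pow_eq_self hn0
  have hc : (∏ p ∈ n.primeFactors, (if p ≤ 16 then 41 else 1)) ≤ 41 ^ 17 := by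
    rw [← Finset.prod_filter_mul_prod_filter_not n.primeFactors (fun p => p ≤ 16)]
    have h1 : ∏ p ∈ n.primeFactors.filter (fun p => p ≤ 16), (if p ≤ 16 then 41 else 1)
        = 41 ^ (n.primeFactors.filter (fun p => p ≤ 16)).card := by
      rw [← Finset.prod_const]
      apply Finset.prod_congr rfl
      intro p hp
      simp only [Finset.mem_filter] at hp
      simp [hp.2]
    have h2 : ∏ p ∈ n.primeFactors.filter (fun p => ¬ p ≤ 16), (if p ≤ 16 then 41 else 1) = 1 := by
      apply Finset.prod_eq_one
      intro p hp
      simp only [Finset.mem_filter] at hp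
      simp [hp.2]
    rw [h1, h2, mul_one]
    apply Nat.pow_le_pow_right (by norm_num)
    calc (n.primeFactors.filter (fun p => p ≤ 16)).card ≤ (Finset.range 17).card := by
          apply Finset.card_le_card
          intro p hp
          simp only [Finset.mem_filter] at hp
          simp [Finset.mem_range]
          omega
      _ = 17 := by simp
  calc (∏ p ∈ n.primeFactors, (n.factorization p + 1)) ^ 4
      = ∏ p ∈ n.primeFactors, (n.factorization p + 1) ^ 4 := by rw [Finset.prod_pow]
    _ ≤ ∏ p ∈ n.primeFactors, ((if p ≤ 16 then 41 else 1) * p ^ n.factorization p) := by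
        apply Finset.prod_le_prod'
        intro p hp
        exact prime_pow_bound (Nat.prime_of_mem_primeFactors hp) _
    _ = (∏ p ∈ n.primeFactors, (if p ≤ 16 then 41 else 1)) *
        ∏ p ∈ n.primeFactors, p ^ n.factorization p := Finset.prod_mul_distrib
    _ ≤ 41 ^ 17 * n := by rw [hprod]; exact Nat.mul_le_mul_right _ hc

private lemma aFac_le_card_divisors (q n : ℕ) (hn : n ≠ 0) : aFac q n ≤ n.divisors.card := by
  unfold aFac
  apply Finset.card_le_card_of_injOn (fun p => p.1)
  · rintro ⟨u, v⟩ hp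
    simp only [Finset.mem_coe, Finset.mem_filter, Finset.mem_product, Finset.mem_Icc] at hp
    exact Nat.mem_divisors.mpr ⟨⟨v, hp.2.symm⟩, hn⟩
  · rintro ⟨u, v⟩ hp ⟨u', v'⟩ hp' h
    simp only [Finset.mem_coe, Finset.mem_filter, Finset.mem_product, Finset.mem_Icc] at hp hp'
    simp only at h
    subst h
    have hu : u ≠ 0 := by omega
    have : v = v' := by
      have := hp.2.trans hp'.2.symm
      exact Nat.eq_of_mul_eq_mul_left (Nat.pos_of_ne_zero hu) this
    simp [this]

private lemma aFac_eq_card_divisors (q ℓ : ℕ) (h1 : 1 ≤ ℓ) (h2 : ℓ ≤ q) :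
    aFac q ℓ = ℓ.divisors.card := by
  unfold aFac
  apply Finset.card_nbij' (fun p => p.1) (fun u => (u, ℓ / u))
  · rintro ⟨u, v⟩ hp
    simp only [Finset.mem_coe, Finset.mem_filter, Finset.mem_product, Finset.mem_Icc] at hp
    exact Nat.mem_divisors.mpr ⟨⟨v, hp.2.symm⟩, by omega⟩
  · intro u hu
    rw [Finset.mem_coe, Nat.mem_divisors] at hu
    obtain ⟨⟨v, hv⟩, -⟩ := hu
    have hu0 : u ≠ 0 := by rintro rfl; simp at hv; omega
    have hv0 : v ≠ 0 := by rintro rfl; simp at hv; omega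
    simp only [Finset.mem_coe, Finset.mem_filter, Finset.mem_product, Finset.mem_Icc]
    subst hv
    rw [Nat.mul_div_cancel_left v (Nat.pos_of_ne_zero hu0)]
    refine ⟨⟨⟨by omega, ?_⟩, by omega, ?_⟩, rfl⟩
    · exact le_trans (Nat.le_mul_of_pos_right u (Nat.pos_of_ne_zero hv0)) h2
    · exact le_trans (Nat.le_mul_of_pos_left v (Nat.pos_of_ne_zero hu0)) h2
  · rintro ⟨u, v⟩ hp
    simp only [Finset.mem_coe, Finset.mem_filter, Finset.mem_product, Finset.mem_Icc] at hp
    have hu0 : u ≠ 0 := by omega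
    simp only
    rw [← hp.2, Nat.mul_div_cancel_left v (Nat.pos_of_ne_zero hu0)]
  · intro u hu
    simp only

/-- fourth root -/
noncomputable def frt (x : ℝ) : ℝ := Real.sqrt (Real.sqrt x)

private lemma frt_nonneg (x : ℝ) : 0 ≤ frt x := Real.sqrt_nonneg _

private lemma frt_pow4 {x : ℝ} (hx : 0 ≤ x) : frt x ^ 4 = x := by
  unfold frt
  rw [show (4 : ℕ) = 2 * 2 by norm_num, pow_mul, Real.sq_sqrt (Real.sqrt_nonneg _),
    Real.sq_sqrt hx]

private lemma frt_eq_of_pow4 {a x : ℝ} (ha : 0 ≤ a) (h : a ^ 4 = x) : frt x = a := by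
  subst h
  unfold frt
  rw [show (a ^ 4) = (a ^ 2) ^ 2 by ring, Real.sqrt_sq (by positivity), Real.sqrt_sq ha]

private lemma frt_mono {x y : ℝ} (h : x ≤ y) : frt x ≤ frt y :=
  Real.sqrt_le_sqrt (Real.sqrt_le_sqrt h)

private lemma frt_mul {x : ℝ} (hx : 0 ≤ x) (y : ℝ) : frt (x * y) = frt x * frt y := by
  unfold frt
  rw [Real.sqrt_mul hx, Real.sqrt_mul (Real.sqrt_nonneg _)]

private lemma frt_sq (x : ℝ) : frt x * frt x = Real.sqrt x :=
  Real.mul_self_sqrt (Real.sqrt_nonneg x)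

private lemma le_frt_of_pow4_le {a x : ℝ} (ha : 0 ≤ a) (h : a ^ 4 ≤ x) : a ≤ frt x := by
  have hx : 0 ≤ x := le_trans (by positivity) h
  have := frt_mono h
  rwa [frt_eq_of_pow4 ha rfl] at this

private lemma frt_div_anti {x y : ℝ} (hy : 1 ≤ y) (h : y ≤ x) : frt x / x ≤ frt y / y := by
  have hy0 : (0:ℝ) < y := by linarith
  have hx0 : (0:ℝ) < x := by linarith
  rw [div_le_div_iff₀ hx0 hy0]
  have h4 : (frt x * y) ^ 4 ≤ (frt y * x) ^ 4 := by
    rw [mul_pow, mul_pow, frt_pow4 hx0.le, frt_pow4 hy0.le]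
    have h1 : 0 ≤ (x * y) * ((x - y) * (x ^ 2 + x * y + y ^ 2)) :=
      mul_nonneg (by positivity) (mul_nonneg (by linarith) (by positivity))
    nlinarith [h1]
  exact le_of_pow_le_pow_left₀ (by norm_num) (mul_nonneg (frt_nonneg _) hx0.le) h4

private lemma sum_frt_div_le (m : ℕ) :
    ∑ k ∈ Finset.Icc 1 m, frt k / k ≤ 4 * frt m := by
  induction m with
  | zero => simp [frt, Real.sqrt_zero]
  | succ m ih =>
    rw [Finset.sum_Icc_succ_top (by omega : 1 ≤ m + 1)]
    have key : 4 * frt m + frt (m + 1) / (m + 1) ≤ 4 * frt (m + 1) := by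
      set a := frt ((m : ℝ) + 1) with ha
      set b := frt (m : ℝ) with hb
      have ha4 : a ^ 4 = (m : ℝ) + 1 := frt_pow4 (by positivity)
      have hb4 : b ^ 4 = (m : ℝ) := frt_pow4 (by positivity)
      have hb0 : 0 ≤ b := frt_nonneg _
      have hab : b ≤ a := frt_mono (by linarith)
      have ha0' : 0 ≤ a := frt_nonneg _
      have ha1 : 1 ≤ a := by
        by_contra hc
        push_neg at hc
        have h5 : a ^ 4 < 1 := pow_lt_one₀ ha0' hc (by norm_num)
        rw [ha4] at h5
        have h6 : (0:ℝ) ≤ (m:ℝ) := Nat.cast_nonneg m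
        linarith
      have ha0 : (0:ℝ) < a := by linarith
      have e1 : (a - b) * (a ^ 3 + a ^ 2 * b + a * b ^ 2 + b ^ 3) = 1 := by
        have : (a - b) * (a ^ 3 + a ^ 2 * b + a * b ^ 2 + b ^ 3) = a ^ 4 - b ^ 4 := by ring
        rw [this, ha4, hb4]; ring
      have e2 : a ^ 3 + a ^ 2 * b + a * b ^ 2 + b ^ 3 ≤ 4 * a ^ 3 := by
        have t1 : b ^ 3 ≤ a ^ 3 := pow_le_pow_left₀ hb0 hab 3
        have t2 : b ^ 2 ≤ a ^ 2 := pow_le_pow_left₀ hb0 hab 2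
        have t3 : a * b ^ 2 ≤ a * a ^ 2 := mul_le_mul_of_nonneg_left t2 ha0'
        have t4 : a ^ 2 * b ≤ a ^ 2 * a := mul_le_mul_of_nonneg_left hab (by positivity)
        nlinarith [t1, t3, t4]
      have hstep : 1 ≤ 4 * a ^ 3 * (a - b) := by
        calc (1:ℝ) = (a - b) * (a ^ 3 + a ^ 2 * b + a * b ^ 2 + b ^ 3) := e1.symm
          _ ≤ (a - b) * (4 * a ^ 3) :=
            mul_le_mul_of_nonneg_left e2 (sub_nonneg.mpr hab)
          _ = 4 * a ^ 3 * (a - b) := by ring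
      have hdiv : a / ((m:ℝ) + 1) ≤ 4 * (a - b) := by
        rw [← ha4, div_le_iff₀ (by positivity)]
        nlinarith [hstep, ha0]
      linarith
    push_cast
    linarith


/-- There is an absolute constant `C > 0` such that for all `q ≥ 3`,
`|∑_{(ℓ,q)=1, ℓ≤q} (∑_{n≤q², n≡ℓ (q)} a_q(n)/n)² − ∑_{(ℓ,q)=1, ℓ≤q} d(ℓ)²/ℓ²|
  ≤ C log⁴(q+2)/√q`, where `d` is the divisor function. -/
theorem sum_sq_aFac_sub_divisor_le : ∃ C : ℝ, 0 < C ∧ ∀ q : ℕ, 3 ≤ q →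
    |(∑ ℓ ∈ (Finset.Icc 1 q).filter (fun ℓ => Nat.Coprime ℓ q),
        (∑ n ∈ (Finset.Icc 1 (q ^ 2)).filter (fun n : ℕ => ((n : ZMod q)) = (ℓ : ZMod q)),
          (aFac q n : ℝ) / n) ^ 2) -
      ∑ ℓ ∈ (Finset.Icc 1 q).filter (fun ℓ => Nat.Coprime ℓ q),
        (ℓ.divisors.card : ℝ) ^ 2 / (ℓ : ℝ) ^ 2| ≤
      C * Real.log (q + 2) ^ 4 / Real.sqrt q := by
  refine ⟨32 * 41 ^ 17, by positivity, ?_⟩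
  intro q hq
  have hq0 : 0 < q := by omega
  have hqR : (3 : ℝ) ≤ (q : ℝ) := by exact_mod_cast hq
  haveI : NeZero q := ⟨by omega⟩
  set F : Finset ℕ := (Finset.Icc 1 q).filter (fun ℓ => Nat.Coprime ℓ q) with hF
  set f : ℕ → ℝ := fun n => (aFac q n : ℝ) / n with hf
  have hf0 : ∀ n, 0 ≤ f n := fun n => by
    simp only [hf]; positivity
  -- uniqueness of residues in [1, q]
  have resid : ∀ a b : ℕ, 1 ≤ a → a ≤ q → 1 ≤ b → b ≤ q →
      ((a : ZMod q) = (b : ZMod q)) → a = b := by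
    intro a b ha ha' hb hb' h
    rw [ZMod.natCast_eq_natCast_iff] at h
    rcases le_total a b with hab | hab
    · have hd := (Nat.modEq_iff_dvd' hab).mp h
      rcases Nat.eq_zero_or_pos (b - a) with h0 | h0
      · omega
      · have := Nat.le_of_dvd h0 hd; omega
    · have hd := (Nat.modEq_iff_dvd' hab).mp h.symm
      rcases Nat.eq_zero_or_pos (a - b) with h0 | h0
      · omega
      · have := Nat.le_of_dvd h0 hd; omega
  -- decomposition of the inner index set
  have hdecomp : ∀ ℓ ∈ F, (Finset.Icc 1 (q ^ 2)).filter
        (fun n : ℕ => ((n : ZMod q)) = (ℓ : ZMod q))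
      = insert ℓ ((Finset.Icc (q + 1) (q ^ 2)).filter
        (fun n : ℕ => ((n : ZMod q)) = (ℓ : ZMod q))) := by
    intro ℓ hℓ
    simp only [hF, Finset.mem_filter, Finset.mem_Icc] at hℓ
    obtain ⟨⟨hℓ1, hℓq⟩, -⟩ := hℓ
    have hqq : q ≤ q ^ 2 := by nlinarith
    ext n
    simp only [Finset.mem_filter, Finset.mem_Icc, Finset.mem_insert]
    constructor
    · rintro ⟨⟨hn1, hn2⟩, hcong⟩
      by_cases hnq : n ≤ q
      · left; exact resid n ℓ hn1 hnq hℓ1 hℓq hcong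
      · right; exact ⟨⟨by omega, hn2⟩, hcong⟩
    · rintro (rfl | ⟨⟨hn1, hn2⟩, hcong⟩)
      · exact ⟨⟨hℓ1, le_trans hℓq hqq⟩, rfl⟩
      · exact ⟨⟨by omega, hn2⟩, hcong⟩
  have hnotmem : ∀ ℓ ∈ F, ℓ ∉ (Finset.Icc (q + 1) (q ^ 2)).filter
      (fun n : ℕ => ((n : ZMod q)) = (ℓ : ZMod q)) := by
    intro ℓ hℓ hmem
    simp only [hF, Finset.mem_filter, Finset.mem_Icc] at hℓ hmem
    omega
  -- notation for the three quantities
  set S : ℕ → ℝ := fun ℓ => ∑ n ∈ (Finset.Icc 1 (q ^ 2)).filter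
      (fun n : ℕ => ((n : ZMod q)) = (ℓ : ZMod q)), f n with hS
  set E : ℕ → ℝ := fun ℓ => ∑ n ∈ (Finset.Icc (q + 1) (q ^ 2)).filter
      (fun n : ℕ => ((n : ZMod q)) = (ℓ : ZMod q)), f n with hE
  set D : ℕ → ℝ := fun ℓ => (ℓ.divisors.card : ℝ) / ℓ with hD
  have hSdec : ∀ ℓ ∈ F, S ℓ = D ℓ + E ℓ := by
    intro ℓ hℓ
    have hmem := hℓ
    simp only [hF, Finset.mem_filter, Finset.mem_Icc] at hmem
    obtain ⟨⟨hℓ1, hℓq⟩, -⟩ := hmem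
    simp only [hS, hE, hD]
    rw [hdecomp ℓ hℓ, Finset.sum_insert (hnotmem ℓ hℓ)]
    congr 1
    simp only [hf]
    rw [aFac_eq_card_divisors q ℓ hℓ1 hℓq]
  have hE0 : ∀ ℓ, 0 ≤ E ℓ := fun ℓ => Finset.sum_nonneg fun n _ => hf0 n
  have hD0 : ∀ ℓ, 0 ≤ D ℓ := fun ℓ => by simp only [hD]; positivity
  -- the bound on E
  set K : ℝ := frt ((41 : ℝ) ^ 17) with hK
  have hK0 : 0 ≤ K := frt_nonneg _
  have hsq0 : (0 : ℝ) < Real.sqrt q := Real.sqrt_pos.mpr (by positivity)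
  have hEB : ∀ ℓ ∈ F, E ℓ ≤ 4 * K / Real.sqrt q := by
    intro ℓ hℓ
    have hmem := hℓ
    simp only [hF, Finset.mem_filter, Finset.mem_Icc] at hmem
    obtain ⟨⟨hℓ1, hℓq⟩, -⟩ := hmem
    have hsub : (Finset.Icc (q + 1) (q ^ 2)).filter
        (fun n : ℕ => ((n : ZMod q)) = (ℓ : ZMod q))
        ⊆ (Finset.Icc 1 q).image (fun k => ℓ + k * q) := by
      intro n hn
      simp only [Finset.mem_filter, Finset.mem_Icc] at hn
      obtain ⟨⟨hn1, hn2⟩, hcong⟩ := hn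
      rw [ZMod.natCast_eq_natCast_iff] at hcong
      have hle : ℓ ≤ n := by omega
      obtain ⟨c, hc⟩ := (Nat.modEq_iff_dvd' hle).mp hcong.symm
      have h2 : n = q * c + ℓ := (Nat.sub_eq_iff_eq_add hle).mp hc
      have hc1 : 1 ≤ c := by
        rcases Nat.eq_zero_or_pos c with rfl | h
        · omega
        · exact h
      have hcq : c ≤ q := by
        by_contra hcq
        push_neg at hcq
        have h1 : q * (q + 1) ≤ q * c := Nat.mul_le_mul_left q (by omega)
        nlinarith [h2, hn2, hℓ1]
      simp only [Finset.mem_image, Finset.mem_Icc]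
      exact ⟨c, ⟨hc1, hcq⟩, by rw [h2]; ring⟩
    have hinj : ∀ k ∈ Finset.Icc 1 q, ∀ k' ∈ Finset.Icc 1 q,
        ℓ + k * q = ℓ + k' * q → k = k' := by
      intro k _ k' _ h
      have h' : k * q = k' * q := by omega
      exact Nat.eq_of_mul_eq_mul_right hq0 h'
    have hterm : ∀ k ∈ Finset.Icc 1 q,
        f (ℓ + k * q) ≤ K * ((frt q / q) * (frt k / k)) := by
      intro k hk
      rw [Finset.mem_Icc] at hk
      obtain ⟨hk1, hkq⟩ := hk
      set n : ℕ := ℓ + k * q with hn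
      have hn0 : n ≠ 0 := by omega
      have hnR0 : (0 : ℝ) < (n : ℝ) := by
        have : 1 ≤ n := by omega
        exact_mod_cast Nat.lt_of_lt_of_le Nat.zero_lt_one this
      have c1 : (aFac q n : ℝ) ≤ (n.divisors.card : ℝ) := by
        exact_mod_cast aFac_le_card_divisors q n hn0
      have c2 : (n.divisors.card : ℝ) ≤ frt ((41 : ℝ) ^ 17 * n) := by
        apply le_frt_of_pow4_le (Nat.cast_nonneg _)
        exact_mod_cast card_divisors_pow4_le n
      have c3 : frt ((41 : ℝ) ^ 17 * n) = K * frt n := frt_mul (by positivity) _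
      have hkq1 : (1 : ℝ) ≤ (k : ℝ) * q := by
        have h : (1 : ℕ) ≤ k * q := Nat.mul_pos (by omega) hq0
        exact_mod_cast h
      have hkqn : (k : ℝ) * q ≤ (n : ℝ) := by
        have : k * q ≤ n := by omega
        exact_mod_cast this
      have c4 : frt n / n ≤ frt ((k : ℝ) * q) / ((k : ℝ) * q) := frt_div_anti hkq1 hkqn
      have c5 : frt ((k : ℝ) * q) = frt k * frt q := frt_mul (Nat.cast_nonneg k) _
      have hk0R : (0 : ℝ) < (k : ℝ) := by exact_mod_cast hk1
      have hq0R : (0 : ℝ) < (q : ℝ) := by positivity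
      calc f n = (aFac q n : ℝ) / n := rfl
        _ ≤ (n.divisors.card : ℝ) / n := by
            apply div_le_div_of_nonneg_right c1 hnR0.le
        _ ≤ (K * frt n) / n := by
            rw [← c3]
            apply div_le_div_of_nonneg_right c2 hnR0.le
        _ = K * (frt n / n) := by ring
        _ ≤ K * (frt ((k : ℝ) * q) / ((k : ℝ) * q)) := by
            apply mul_le_mul_of_nonneg_left c4 hK0
        _ = K * ((frt q / q) * (frt k / k)) := by
            rw [c5]; field_simp
    calc E ℓ ≤ ∑ n ∈ (Finset.Icc 1 q).image (fun k => ℓ + k * q), f n := by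
          simp only [hE]
          exact Finset.sum_le_sum_of_subset_of_nonneg hsub (fun n _ _ => hf0 n)
      _ = ∑ k ∈ Finset.Icc 1 q, f (ℓ + k * q) := Finset.sum_image hinj
      _ ≤ ∑ k ∈ Finset.Icc 1 q, K * ((frt q / q) * (frt k / k)) :=
          Finset.sum_le_sum hterm
      _ = K * ((frt q / q) * ∑ k ∈ Finset.Icc 1 q, frt k / k) := by
          rw [← Finset.mul_sum, ← Finset.mul_sum]
      _ ≤ K * ((frt q / q) * (4 * frt q)) := by
          apply mul_le_mul_of_nonneg_left _ hK0
          exact mul_le_mul_of_nonneg_left (sum_frt_div_le q)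
            (div_nonneg (frt_nonneg _) (Nat.cast_nonneg q))
      _ = 4 * K / Real.sqrt q := by
          have hmul : Real.sqrt q * Real.sqrt q = (q : ℝ) :=
            Real.mul_self_sqrt (by positivity)
          have h1 : (frt q / q) * (4 * frt q) = 4 * (Real.sqrt q) / q := by
            rw [← frt_sq]; ring
          have h3 : (4 : ℝ) * Real.sqrt q / q = 4 / Real.sqrt q := by
            rw [div_eq_div_iff (by positivity : ((q : ℝ)) ≠ 0) hsq0.ne']
            rw [mul_assoc, hmul]
          rw [h1, h3]
          ring
  -- sum over classes is at most the full sum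
  set T : ℝ := ∑ n ∈ Finset.Icc 1 (q ^ 2), f n with hT
  have hsumS : ∑ ℓ ∈ F, S ℓ ≤ T := by
    have hinj : ∀ x ∈ F, ∀ y ∈ F, ((x : ZMod q) = (y : ZMod q)) → x = y := by
      intro x hx y hy h
      simp only [hF, Finset.mem_filter, Finset.mem_Icc] at hx hy
      exact resid x y hx.1.1 hx.1.2 hy.1.1 hy.1.2 h
    calc ∑ ℓ ∈ F, S ℓ
        = ∑ c ∈ F.image (fun ℓ : ℕ => (ℓ : ZMod q)),
            ∑ n ∈ (Finset.Icc 1 (q ^ 2)).filter (fun n : ℕ => ((n : ZMod q)) = c), f n :=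
          by rw [Finset.sum_image hinj]
      _ ≤ ∑ c ∈ (Finset.univ : Finset (ZMod q)),
            ∑ n ∈ (Finset.Icc 1 (q ^ 2)).filter (fun n : ℕ => ((n : ZMod q)) = c), f n :=
          Finset.sum_le_sum_of_subset_of_nonneg (Finset.subset_univ _)
            (fun c _ _ => Finset.sum_nonneg fun n _ => hf0 n)
      _ = T := Finset.sum_fiberwise_of_maps_to (fun n _ => Finset.mem_univ _) f
  -- the full sum equals the square of a harmonic sum
  set H : ℝ := ∑ u ∈ Finset.Icc 1 q, (1 : ℝ) / u with hH
  have hTH : T = H ^ 2 := by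
    have step1 : T = ∑ p ∈ (Finset.Icc 1 q ×ˢ Finset.Icc 1 q),
        (1 : ℝ) / ((p.1 : ℝ) * (p.2 : ℝ)) := by
      rw [hT]
      rw [← Finset.sum_fiberwise_of_maps_to
        (g := fun p : ℕ × ℕ => p.1 * p.2) (t := Finset.Icc 1 (q ^ 2))
        (fun p hp => by
          simp only [Finset.mem_product, Finset.mem_Icc] at hp
          simp only [Finset.mem_Icc]
          constructor
          · exact Nat.mul_pos (by omega) (by omega)
          · calc p.1 * p.2 ≤ q * q := Nat.mul_le_mul hp.1.2 hp.2.2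
              _ = q ^ 2 := (sq q).symm)
        (fun p : ℕ × ℕ => (1 : ℝ) / ((p.1 : ℝ) * (p.2 : ℝ)))]
      apply Finset.sum_congr rfl
      intro n hn
      rw [Finset.mem_Icc] at hn
      have : ∀ p ∈ (Finset.Icc 1 q ×ˢ Finset.Icc 1 q).filter
          (fun p : ℕ × ℕ => p.1 * p.2 = n),
          (1 : ℝ) / ((p.1 : ℝ) * (p.2 : ℝ)) = 1 / (n : ℝ) := by
        intro p hp
        rw [Finset.mem_filter] at hp
        rw [← hp.2]
        push_cast
        ring
      rw [Finset.sum_congr rfl this, Finset.sum_const, nsmul_eq_mul]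
      simp only [hf, aFac, mul_one_div]
    rw [step1, Finset.sum_product, hH, sq, Finset.sum_mul_sum]
    apply Finset.sum_congr rfl
    intro u _
    apply Finset.sum_congr rfl
    intro v _
    rw [one_div_mul_one_div]
  -- harmonic bound
  have hHlog : H ≤ 1 + Real.log q := by
    have h1 := harmonic_le_one_add_log q
    have heq : H = ((harmonic q : ℚ) : ℝ) := by
      rw [harmonic_eq_sum_Icc, hH]
      push_cast
      apply Finset.sum_congr rfl
      intro u _
      rw [one_div]
    rw [heq]
    exact h1
  -- log bounds
  set L : ℝ := Real.log (q + 2) with hL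
  have hL1 : 1 ≤ L := by
    rw [hL, Real.le_log_iff_exp_le (by positivity)]
    have := Real.exp_one_lt_d9
    linarith
  have hlogq : Real.log q ≤ L := by
    rw [hL]
    apply Real.log_le_log (by positivity)
    linarith
  have hHL : H ≤ 2 * L := by linarith
  have hH0 : 0 ≤ H := by
    rw [hH]; exact Finset.sum_nonneg fun u _ => by positivity
  have hTL : T ≤ 4 * L ^ 2 := by
    rw [hTH]
    calc H ^ 2 ≤ (2 * L) ^ 2 := by
          apply pow_le_pow_left₀ hH0 hHL
      _ = 4 * L ^ 2 := by ring
  -- assemble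
  set B : ℝ := 4 * K / Real.sqrt q with hB
  have hB0 : 0 ≤ B := by rw [hB]; positivity
  have hDS : ∀ ℓ ∈ F, D ℓ ≤ S ℓ := by
    intro ℓ hℓ
    rw [hSdec ℓ hℓ]
    linarith [hE0 ℓ]
  have hS0 : ∀ ℓ ∈ F, 0 ≤ S ℓ := fun ℓ hℓ => le_trans (hD0 ℓ) (hDS ℓ hℓ)
  have hterm : ∀ ℓ ∈ F, S ℓ ^ 2 - D ℓ ^ 2 ≤ B * (S ℓ + D ℓ) := by
    intro ℓ hℓ
    have h1 : S ℓ ^ 2 - D ℓ ^ 2 = E ℓ * (S ℓ + D ℓ) := by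
      rw [hSdec ℓ hℓ]; ring
    rw [h1]
    apply mul_le_mul_of_nonneg_right (hEB ℓ hℓ)
    linarith [hS0 ℓ hℓ, hD0 ℓ]
  have hterm0 : ∀ ℓ ∈ F, 0 ≤ S ℓ ^ 2 - D ℓ ^ 2 := by
    intro ℓ hℓ
    have := hDS ℓ hℓ
    have := hD0 ℓ
    nlinarith
  have hrw : ∑ ℓ ∈ F, (ℓ.divisors.card : ℝ) ^ 2 / (ℓ : ℝ) ^ 2 = ∑ ℓ ∈ F, D ℓ ^ 2 := by
    apply Finset.sum_congr rfl
    intro ℓ _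
    rw [hD, div_pow]
  rw [hrw, ← Finset.sum_sub_distrib]
  rw [abs_of_nonneg (Finset.sum_nonneg hterm0)]
  calc ∑ ℓ ∈ F, (S ℓ ^ 2 - D ℓ ^ 2)
      ≤ ∑ ℓ ∈ F, B * (S ℓ + D ℓ) := Finset.sum_le_sum hterm
    _ = B * (∑ ℓ ∈ F, S ℓ + ∑ ℓ ∈ F, D ℓ) := by
        rw [← Finset.mul_sum, Finset.sum_add_distrib]
    _ ≤ B * (T + T) := by
        apply mul_le_mul_of_nonneg_left _ hB0
        have h2 : ∑ ℓ ∈ F, D ℓ ≤ ∑ ℓ ∈ F, S ℓ := Finset.sum_le_sum hDS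
        linarith [hsumS]
    _ = 2 * B * T := by ring
    _ ≤ 2 * B * (4 * L ^ 2) := by
        apply mul_le_mul_of_nonneg_left hTL (by linarith)
    _ = 32 * K * L ^ 2 / Real.sqrt q := by rw [hB]; ring
    _ ≤ 32 * 41 ^ 17 * L ^ 4 / Real.sqrt q := by
        apply div_le_div_of_nonneg_right _ hsq0.le
        have hK41 : K ≤ (41 : ℝ) ^ 17 := by
          rw [hK]
          have h1 : ((41 : ℝ) ^ 17) ≤ ((41 : ℝ) ^ 17) ^ 4 := by
            apply le_self_pow₀ (by norm_num : (1:ℝ) ≤ (41:ℝ) ^ 17) (by norm_num)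
          calc frt ((41 : ℝ) ^ 17) ≤ frt (((41 : ℝ) ^ 17) ^ 4) := frt_mono h1
            _ = (41 : ℝ) ^ 17 := frt_eq_of_pow4 (by positivity) rfl
        have hL2 : L ^ 2 ≤ L ^ 4 := by
          apply pow_le_pow_right₀ hL1 (by norm_num)
        nlinarith [hK0, hL1, hK41, hL2, sq_nonneg L]
end
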